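/- Let λ > 1, r_L > 0, μ_L ≥ 0, and θ₀ ∈ ℝ. Define β : ℝ → ℝ by β(t) = −r_L − μ_L − λ·r_L·cos(θ₀ + t/r_L). Suppose t₁ < t₂ satisfy β(t₁) = β(t₂) = −μ_L, β'(t₁) = −√(λ² − 1), β'(t₂) = √(λ² − 1), and (t₂ − t₁)/r_L < 2π. Then (t₂ − t₁)/r_L = 2π − 2·arccos(1/λ). -/

import Mathlib

open Real

/-- For `e = 1` and `λ > 1`, the angle of the `L` segment of a non-trivial
optimal `SLS` path equals `2π − 2 arccos(1/λ)`. -/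
theorem SLS_left_turn_angle
    (lam rL μL θ₀ t₁ t₂ : ℝ) (β : ℝ → ℝ)
    (hlam : 1 < lam) (hrL : 0 < rL) (hμL : 0 ≤ μL)
    (hβ : ∀ t, β t = -rL - μL - lam * rL * Real.cos (θ₀ + t / rL))
    (ht : t₁ < t₂)
    (hβ₁ : β t₁ = -μL) (hβ₂ : β t₂ = -μL)
    (hd₁ : deriv β t₁ = -Real.sqrt (lam ^ 2 - 1))
    (hd₂ : deriv β t₂ = Real.sqrt (lam ^ 2 - 1))
    (hlt : (t₂ - t₁) / rL < 2 * π) :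
    (t₂ - t₁) / rL = 2 * π - 2 * Real.arccos (1 / lam) := by
  have hlam0 : 0 < lam := lt_trans one_pos hlam
  have hlamne : lam ≠ 0 := ne_of_gt hlam0
  have hrLne : rL ≠ 0 := ne_of_gt hrL
  set x₁ : ℝ := θ₀ + t₁ / rL with hx₁
  set x₂ : ℝ := θ₀ + t₂ / rL with hx₂
  set s : ℝ := Real.sqrt (lam ^ 2 - 1) with hs
  have hsq : s ^ 2 = lam ^ 2 - 1 := Real.sq_sqrt (by nlinarith)
  have hderiv : ∀ t, deriv β t = lam * Real.sin (θ₀ + t / rL) := by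
    intro t
    have hβf : β = fun t => -rL - μL - lam * rL * Real.cos (θ₀ + t / rL) := funext hβ
    have h1 : HasDerivAt (fun t : ℝ => θ₀ + t / rL) (1 / rL) t := by
      simpa using ((hasDerivAt_id t).div_const rL).const_add θ₀
    have h3 := (h1.cos.const_mul (lam * rL)).const_sub (-rL - μL)
    rw [hβf, h3.deriv]
    field_simp
  -- cosine values
  have hc₁ : Real.cos x₁ = -(1 / lam) := by
    have h := hβ t₁
    rw [hβ₁] at h
    have h' : lam * rL * Real.cos x₁ = -rL := by rw [← hx₁] at h; linarith
    field_simp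
    nlinarith [h']
  have hc₂ : Real.cos x₂ = -(1 / lam) := by
    have h := hβ t₂
    rw [hβ₂] at h
    have h' : lam * rL * Real.cos x₂ = -rL := by rw [← hx₂] at h; linarith
    field_simp
    nlinarith [h']
  -- sine values
  have hs₁ : Real.sin x₁ = -(s / lam) := by
    have h := hderiv t₁
    rw [hd₁, ← hx₁] at h
    field_simp
    linarith
  have hs₂ : Real.sin x₂ = s / lam := by
    have h := hderiv t₂
    rw [hd₂, ← hx₂] at h
    field_simp
    linarith
  -- arccos values
  set a : ℝ := Real.arccos (1 / lam) with ha
  have hla : 1 / lam < 1 := by rw [div_lt_one hlam0]; exact hlam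
  have hla0 : 0 < 1 / lam := by positivity
  have hca : Real.cos a = 1 / lam :=
    Real.cos_arccos (by linarith) (le_of_lt hla)
  have hsa : Real.sin a = s / lam := by
    rw [ha, Real.sin_arccos]
    rw [show 1 - (1 / lam) ^ 2 = (lam ^ 2 - 1) / lam ^ 2 by field_simp]
    rw [Real.sqrt_div (by nlinarith) (lam ^ 2), Real.sqrt_sq (le_of_lt hlam0)]
  set w : ℝ := (t₂ - t₁) / rL with hw
  have hwx : w = x₂ - x₁ := by rw [hw, hx₁, hx₂]; ring
  set D : ℝ := 2 * π - 2 * a with hD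
  -- trig values of w
  have hcw : Real.cos w = (2 - lam ^ 2) / lam ^ 2 := by
    rw [hwx, Real.cos_sub, hc₁, hc₂, hs₁, hs₂]
    linear_combination (-(1 : ℝ)/lam^2) * hsq
  have hsw : Real.sin w = -(2 * s) / lam ^ 2 := by
    rw [hwx, Real.sin_sub, hc₁, hc₂, hs₁, hs₂]
    ring
  -- trig values of D
  have hcD : Real.cos D = (2 - lam ^ 2) / lam ^ 2 := by
    rw [hD, Real.cos_sub, Real.cos_two_pi, Real.sin_two_pi, Real.cos_two_mul, hca]
    field_simp
    ring
  have hsD : Real.sin D = -(2 * s) / lam ^ 2 := by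
    rw [hD, Real.sin_sub, Real.cos_two_pi, Real.sin_two_pi, Real.sin_two_mul, hca, hsa]
    ring
  clear_value s x₁ x₂ a w D
  have hone : Real.cos (w - D) = 1 := by
    rw [Real.cos_sub, hcw, hsw, hcD, hsD]
    field_simp
    linear_combination 4 * hsq
  -- bounds
  have hw0 : 0 < w := by rw [hw]; exact div_pos (by linarith) hrL
  have ha0 : 0 < a := by rw [ha]; exact Real.arccos_pos.mpr hla
  have hapi : a < π / 2 := by rw [ha]; exact Real.arccos_lt_pi_div_two.mpr hla0
  have hD0 : 0 < D := by
    have := Real.pi_pos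
    rw [hD]; linarith
  have hD2 : D < 2 * π := by rw [hD]; linarith
  have hzero : w - D = 0 :=
    (Real.cos_eq_one_iff_of_lt_of_lt (by linarith) (by linarith)).mp hone
  rw [hw, hD] at hzero ⊢
  linarith
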